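/- Let R and S be commutative rings and f : R →+* S a ring homomorphism admitting an R-linear section: viewing S as an R-module via f, there is an R-linear map s : S →ₗ[R] R with f(s(x)) = x for all x ∈ S. Then S is the localization of R at an idempotent: there exists an idempotent element u ∈ R such that, regarding S as an R-algebra via f, S is the localization of R away from u (`IsLocalization.Away u S`). -/

import Mathlib

/-- If a ring homomorphism of commutative rings `R → S` admits an `R`-linear section
(viewing `S` as an `R`-module via the homomorphism), then `S` is the localization of
`R` away from an idempotent element. -/
theorem isLocalization_away_of_linear_section {R S : Type*} [CommRing R] [CommRing S]
    [Algebra R S] (s : S →ₗ[R] R) (hs : ∀ x : S, algebraMap R S (s x) = x) :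
    ∃ u : R, IsIdempotentElem u ∧ IsLocalization.Away u S := by
  set u := s 1 with hu
  have hu1 : algebraMap R S u = 1 := hs 1
  have hsmul : ∀ r : R, s (algebraMap R S r) = r * u := by
    intro r
    have : s (r • (1 : S)) = r • s 1 := s.map_smul r 1
    simpa [Algebra.smul_def, smul_eq_mul] using this
  have hidem : IsIdempotentElem u := by
    have := hsmul u
    rw [hu1] at this
    simpa [IsIdempotentElem, hu, mul_comm] using this.symm
  have hker : ∀ r : R, algebraMap R S r = 0 → u * r = 0 := by
    intro r hr
    have := hsmul r
    rw [hr, map_zero] at this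
    rw [mul_comm]
    exact this.symm
  refine ⟨u, hidem, ?_⟩
  constructor
  constructor
  · rintro ⟨y, n, rfl⟩
    simp [map_pow, hu1]
  · intro z
    exact ⟨(s z, 1), by simp [hs z]⟩
  · intro x y h
    refine ⟨⟨u, Submonoid.mem_powers u⟩, ?_⟩
    have : algebraMap R S (x - y) = 0 := by rw [map_sub, h, sub_self]
    have := hker _ this
    simp only
    rw [mul_sub] at this
    exact sub_eq_zero.mp this
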